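/- Let (Ω, F, P) be a probability space with a filtration (F_l)_{l=0}^T, let (Y_l)_{l=0}^T be an adapted, integrable, bounded real-valued process, let (U_l)_{l=0}^T be its Snell envelope, and let τ* = min{l : U_l = Y_l}. Then the stopped process (U_{l ∧ τ*})_{l=0}^T is a martingale with respect to (F_l): E[U_{(l+1) ∧ τ*} | F_l] = U_{l ∧ τ*} almost surely for every l < T. -/

import Mathlib

open MeasureTheory

/-- The Snell envelope stopped at `τ* = min {l : U l = Y l}` is a martingale:
`E[U ((l+1) ∧ τ*) | F l] = U (l ∧ τ*)` a.s. for every `l < T`. -/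
theorem snell_stopped_process_martingale
    {Ω : Type*} [m0 : MeasurableSpace Ω] (μ : Measure Ω) [IsProbabilityMeasure μ]
    (ℱ : MeasureTheory.Filtration ℕ m0)
    (T : ℕ) (Y : ℕ → Ω → ℝ)
    (hadapted : ∀ l, l ≤ T → StronglyMeasurable[ℱ l] (Y l))
    (hint : ∀ l, l ≤ T → Integrable (Y l) μ)
    (hbdd : ∃ C, ∀ l ω, |Y l ω| ≤ C)
    (U : ℕ → Ω → ℝ)
    (hUT : U T = Y T)
    (hUrec : ∀ l, l < T → U l = fun ω => max (Y l ω) ((μ[U (l + 1) | ℱ l]) ω))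
    (τ : Ω → ℕ)
    (hτ : ∀ ω, τ ω = sInf {l : ℕ | U l ω = Y l ω}) :
    ∀ l, l < T →
      (μ[(fun ω => U (min (l + 1) (τ ω)) ω) | ℱ l]) =ᵐ[μ] fun ω => U (min l (τ ω)) ω := by
  -- Strong measurability and integrability of U k for k ≤ T, by downward induction
  have key : ∀ d k, k + d = T → StronglyMeasurable[ℱ k] (U k) ∧ Integrable (U k) μ := by
    intro d
    induction d with
    | zero =>
      intro k hk
      have : k = T := by omega
      subst this
      rw [hUT]
      exact ⟨hadapted k le_rfl, hint k le_rfl⟩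
    | succ d ih =>
      intro k hk
      have hkT : k < T := by omega
      have h1 := ih (k + 1) (by omega)
      rw [hUrec k hkT]
      exact ⟨continuous_max.comp_stronglyMeasurable
          ((hadapted k hkT.le).prodMk stronglyMeasurable_condExp),
        (hint k hkT.le).sup integrable_condExp⟩
  have hSMU : ∀ k, k ≤ T → StronglyMeasurable[ℱ k] (U k) := fun k hk =>
    (key (T - k) k (by omega)).1
  have hIntU : ∀ k, k ≤ T → Integrable (U k) μ := fun k hk =>
    (key (T - k) k (by omega)).2
  -- characterization of {τ ≤ n}
  have hτle : ∀ ω n, τ ω ≤ n ↔ ∃ k ≤ n, U k ω = Y k ω := by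
    intro ω n
    rw [hτ]
    constructor
    · intro h
      refine ⟨sInf {l : ℕ | U l ω = Y l ω}, h, ?_⟩
      exact Nat.sInf_mem (s := {l | U l ω = Y l ω}) ⟨T, show U T ω = Y T ω from congrFun hUT ω⟩
    · rintro ⟨k, hk, hUY⟩
      exact le_trans (Nat.sInf_le hUY) hk
  -- measurability of {τ ≤ n}
  have hmeasle : ∀ n, n ≤ T → MeasurableSet[ℱ n] {ω | τ ω ≤ n} := by
    intro n hn
    have hset : {ω | τ ω ≤ n} = ⋃ k ∈ Set.Iic n, {ω | U k ω = Y k ω} := by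
      ext ω
      simp [hτle ω n]
    rw [hset]
    refine MeasurableSet.biUnion (Set.to_countable _) fun k hk => ?_
    exact ℱ.mono hk _
      ((hSMU k (le_trans hk hn)).measurableSet_eq_fun (hadapted k (le_trans hk hn)))
  have hmeasgt : ∀ n, n ≤ T → MeasurableSet[ℱ n] {ω | n < τ ω} := by
    intro n hn
    have : {ω | n < τ ω} = {ω | τ ω ≤ n}ᶜ := by
      ext ω; simp [not_le]
    rw [this]
    exact (hmeasle n hn).compl
  -- key pointwise identity
  have hkey : ∀ (n : ℕ) (ω : Ω), U (min (n + 1) (τ ω)) ω =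
      U (min n (τ ω)) ω +
        Set.indicator {ω | n < τ ω} (fun ω => U (n + 1) ω - U n ω) ω := by
    intro n ω
    by_cases h : n < τ ω
    · rw [Set.indicator_of_mem (show ω ∈ {ω | n < τ ω} from h), min_eq_left h, min_eq_left h.le]
      ring
    · push_neg at h
      rw [Set.indicator_of_notMem (by simpa [not_lt] using h),
        min_eq_right h, min_eq_right (h.trans (Nat.le_succ n))]
      ring
  -- stopped process is adapted and integrable
  have hV : ∀ n, n ≤ T →
      StronglyMeasurable[ℱ n] (fun ω => U (min n (τ ω)) ω) ∧
        Integrable (fun ω => U (min n (τ ω)) ω) μ := by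
    intro n
    induction n with
    | zero =>
      intro _
      simp only [Nat.zero_min]
      exact ⟨hSMU 0 (Nat.zero_le T), hIntU 0 (Nat.zero_le T)⟩
    | succ n ih =>
      intro hn
      have hn' : n ≤ T := by omega
      obtain ⟨hS, hI⟩ := ih hn'
      have hAmeas : MeasurableSet[ℱ n] {ω | n < τ ω} := hmeasgt n hn'
      have heq : (fun ω => U (min (n + 1) (τ ω)) ω) =
          fun ω => U (min n (τ ω)) ω +
            Set.indicator {ω | n < τ ω} (fun ω => U (n + 1) ω - U n ω) ω :=
        funext (hkey n)
      rw [heq]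
      constructor
      · exact (hS.mono (ℱ.mono (Nat.le_succ n))).add
          (((hSMU (n + 1) hn).sub ((hSMU n hn').mono (ℱ.mono (Nat.le_succ n)))).indicator
            (ℱ.mono (Nat.le_succ n) _ hAmeas))
      · exact hI.add (((hIntU (n + 1) hn).sub (hIntU n hn')).indicator (ℱ.le n _ hAmeas))
  -- main proof
  intro l hl
  have hlT : l ≤ T := hl.le
  have hl1T : l + 1 ≤ T := hl
  obtain ⟨hVS, hVI⟩ := hV l hlT
  have hAmeas : MeasurableSet[ℱ l] {ω | l < τ ω} := hmeasgt l hlT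
  have hg_int : Integrable (Set.indicator {ω | l < τ ω}
      (fun ω => U (l + 1) ω - U l ω)) μ :=
    ((hIntU (l + 1) hl1T).sub (hIntU l hlT)).indicator (ℱ.le l _ hAmeas)
  have hfun : (fun ω => U (min (l + 1) (τ ω)) ω) =
      (fun ω => U (min l (τ ω)) ω) +
        Set.indicator {ω | l < τ ω} (fun ω => U (l + 1) ω - U l ω) :=
    funext (hkey l)
  rw [hfun]
  refine (condExp_add hVI hg_int (ℱ l)).trans ?_
  have h1 : μ[(fun ω => U (min l (τ ω)) ω) | ℱ l] = fun ω => U (min l (τ ω)) ω :=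
    condExp_of_stronglyMeasurable (ℱ.le l) hVS hVI
  have h4 : μ[U l | ℱ l] = U l :=
    condExp_of_stronglyMeasurable (ℱ.le l) (hSMU l hlT) (hIntU l hlT)
  have h3 : μ[(fun ω => U (l + 1) ω - U l ω) | ℱ l] =ᵐ[μ]
      fun ω => (μ[U (l + 1) | ℱ l]) ω - U l ω := by
    have := condExp_sub (μ := μ) (m := ℱ l) (hIntU (l + 1) hl1T) (hIntU l hlT)
    rw [h4] at this
    exact this
  have h2 : μ[Set.indicator {ω | l < τ ω} (fun ω => U (l + 1) ω - U l ω) | ℱ l] =ᵐ[μ]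
      Set.indicator {ω | l < τ ω} (μ[(fun ω => U (l + 1) ω - U l ω) | ℱ l]) :=
    condExp_indicator ((hIntU (l + 1) hl1T).sub (hIntU l hlT)) hAmeas
  have h2' : μ[Set.indicator {ω | l < τ ω} (fun ω => U (l + 1) ω - U l ω) | ℱ l]
      =ᵐ[μ] (0 : Ω → ℝ) := by
    refine h2.trans ?_
    filter_upwards [h3] with ω hω
    by_cases hmem : ω ∈ {ω | l < τ ω}
    · rw [Set.indicator_of_mem hmem, hω]
      have hne : U l ω ≠ Y l ω := by
        intro heq
        have : τ ω ≤ l := (hτle ω l).2 ⟨l, le_rfl, heq⟩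
        exact absurd hmem (by simpa [not_lt] using this)
      have hmax : U l ω = max (Y l ω) ((μ[U (l + 1) | ℱ l]) ω) := by
        rw [hUrec l hl]
      rcases max_choice (Y l ω) ((μ[U (l + 1) | ℱ l]) ω) with h | h
      · exact absurd (hmax.trans h) hne
      · simp [hmax.trans h]
    · rw [Set.indicator_of_notMem hmem]
      rfl
  rw [h1]
  filter_upwards [h2'] with ω hω
  simp only [Pi.add_apply, hω, Pi.zero_apply, add_zero]
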